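/- Each propagation rule ♦_{kn} for n ∈ X is derivable in the system nK + ♦_{4X} using weakening: hence if nK + ♦_{kX} proves Γ then nK + ♦_{4X} proves Γ. -/
import Mathlib


/-! Formulas of modal logic in negation normal form. -/
inductive Formula : Type
  | pos : ℕ → Formula
  | neg : ℕ → Formula
  | and : Formula → Formula → Formula
  | or : Formula → Formula → Formula
  | box : Formula → Formula
  | dia : Formula → Formula
  deriving DecidableEq

namespace Formula

/-- Negation by de Morgan duality. -/
def negf : Formula → Formula
  | pos p => neg p
  | neg p => pos p
  | and A B => or A.negf B.negf
  | or A B => and A.negf B.negf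
  | box A => dia A.negf
  | dia A => box A.negf

/-- The (modal) degree of a formula. -/
def deg : Formula → ℕ
  | pos _ => 0
  | neg _ => 0
  | and A B => A.deg + B.deg
  | or A B => A.deg + B.deg
  | box A => A.deg + 1
  | dia A => A.deg + 1

/-- Implication `A ⊃ B := Ā ∨ B`. -/
def impl (A B : Formula) : Formula := or A.negf B

def bot : Formula := and (pos 0) (neg 0)

/-- `♦ⁿ A`. -/
def diaIter : ℕ → Formula → Formula
  | 0, A => A
  | n+1, A => dia (diaIter n A)

end Formula

/-- Nested sequents: finite multisets of formulas and boxed sequents,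
represented as list-like trees considered up to permutation (`NSeq.Perm`). -/
inductive NSeq : Type
  | nil : NSeq
  | fcons : Formula → NSeq → NSeq
  | bcons : NSeq → NSeq → NSeq

namespace NSeq

/-- Multiset union of nested sequents. -/
def append : NSeq → NSeq → NSeq
  | nil, Δ => Δ
  | fcons A Γ, Δ => fcons A (Γ.append Δ)
  | bcons B Γ, Δ => bcons B (Γ.append Δ)

/-- Multiset-like equivalence of nested sequents (hereditary permutation). -/
inductive Perm : NSeq → NSeq → Prop
  | nil : Perm nil nil
  | fcons (A : Formula) {Γ Δ : NSeq} : Perm Γ Δ → Perm (fcons A Γ) (fcons A Δ)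
  | bcons {B B' Γ Δ : NSeq} : Perm B B' → Perm Γ Δ → Perm (bcons B Γ) (bcons B' Δ)
  | swapff (A B : Formula) (Γ : NSeq) : Perm (fcons A (fcons B Γ)) (fcons B (fcons A Γ))
  | swapfb (A : Formula) (B Γ : NSeq) : Perm (fcons A (bcons B Γ)) (bcons B (fcons A Γ))
  | swapbf (A : Formula) (B Γ : NSeq) : Perm (bcons B (fcons A Γ)) (fcons A (bcons B Γ))
  | swapbb (B C Γ : NSeq) : Perm (bcons B (bcons C Γ)) (bcons C (bcons B Γ))
  | trans {Γ Δ Θ : NSeq} : Perm Γ Δ → Perm Δ Θ → Perm Γ Θ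

/-- The corresponding formula of a nested sequent. -/
def form : NSeq → Formula
  | nil => Formula.bot
  | fcons A Γ => Formula.or A Γ.form
  | bcons B Γ => Formula.or Γ.form (Formula.box B.form)

end NSeq

/-- Contexts: nested sequents with a single hole. -/
inductive Ctx : Type
  | hole : Ctx
  | fcons : Formula → Ctx → Ctx
  | scons : NSeq → Ctx → Ctx
  | binto : Ctx → NSeq → Ctx

namespace Ctx

/-- Filling the hole of a context with a nested sequent. -/
def fill : Ctx → NSeq → NSeq
  | hole, Δ => Δ
  | fcons A C, Δ => NSeq.fcons A (C.fill Δ)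
  | scons S C, Δ => NSeq.bcons S (C.fill Δ)
  | binto C S, Δ => NSeq.bcons (C.fill Δ) S

/-- The depth of a context. -/
def depth : Ctx → ℕ
  | hole => 0
  | fcons _ C => C.depth
  | scons _ C => C.depth
  | binto C _ => C.depth + 1

end Ctx

/-- `nestBox [Δ₁, …, Δₖ] Θ = [Δ₁, [Δ₂, [ … , [Δₖ, Θ'] … ]]]` where the innermost
box contains `Δₖ` together with the box `[Θ]`; i.e. a chain of `k+1` nested boxes
whose `i`-th box contains `Δᵢ` and whose innermost box is `[Θ]`. -/
def nestBox : List NSeq → NSeq → NSeq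
  | [], Θ => NSeq.bcons Θ NSeq.nil
  | Δ :: rest, Θ => NSeq.bcons (Δ.append (nestBox rest Θ)) NSeq.nil

/-- `iterBox n Δ`: `n` nested boxes around `Δ`. -/
def iterBox : ℕ → NSeq → NSeq
  | 0, Δ => Δ
  | n+1, Δ => NSeq.bcons (iterBox n Δ) NSeq.nil

/-- Proofs in the nested sequent system `nK` extended with the propagation rules
`♦ₖₙ` for `n ∈ Xk`, the propagation rules `♦₄ₙ` for `n ∈ X4`, and the cut rule
restricted to cut formulas whose degree satisfies `ρ`.  The index `h` is an upper
bound on the height of the proof. -/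
inductive Prf (Xk X4 : Set ℕ) (ρ : ℕ → Prop) : ℕ → NSeq → Prop
  | id (Γ : Ctx) (p : ℕ) (h : ℕ) :
      Prf Xk X4 ρ h (Γ.fill (NSeq.fcons (.pos p) (NSeq.fcons (.neg p) NSeq.nil)))
  | orR {h : ℕ} (Γ : Ctx) (A B : Formula) :
      Prf Xk X4 ρ h (Γ.fill (NSeq.fcons A (NSeq.fcons B NSeq.nil))) →
      Prf Xk X4 ρ (h+1) (Γ.fill (NSeq.fcons (.or A B) NSeq.nil))
  | andR {h : ℕ} (Γ : Ctx) (A B : Formula) :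
      Prf Xk X4 ρ h (Γ.fill (NSeq.fcons A NSeq.nil)) →
      Prf Xk X4 ρ h (Γ.fill (NSeq.fcons B NSeq.nil)) →
      Prf Xk X4 ρ (h+1) (Γ.fill (NSeq.fcons (.and A B) NSeq.nil))
  | boxR {h : ℕ} (Γ : Ctx) (A : Formula) :
      Prf Xk X4 ρ h (Γ.fill (NSeq.bcons (NSeq.fcons A NSeq.nil) NSeq.nil)) →
      Prf Xk X4 ρ (h+1) (Γ.fill (NSeq.fcons (.box A) NSeq.nil))
  | diaR {h : ℕ} (Γ : Ctx) (A : Formula) (Δ : NSeq) :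
      Prf Xk X4 ρ h (Γ.fill (NSeq.fcons (.dia A) (NSeq.bcons (NSeq.fcons A Δ) NSeq.nil))) →
      Prf Xk X4 ρ (h+1) (Γ.fill (NSeq.fcons (.dia A) (NSeq.bcons Δ NSeq.nil)))
  | propk {h : ℕ} (Γ : Ctx) (A : Formula) (Δs : List NSeq) (Δn : NSeq)
      (hn : Δs.length + 1 ∈ Xk) :
      Prf Xk X4 ρ h (Γ.fill (NSeq.fcons (.dia A) (nestBox Δs (NSeq.fcons A Δn)))) →
      Prf Xk X4 ρ (h+1) (Γ.fill (NSeq.fcons (.dia A) (nestBox Δs Δn)))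
  | prop4 {h : ℕ} (Γ : Ctx) (A : Formula) (Δs : List NSeq) (Δl : NSeq)
      (hn : Δs.length + 2 ∈ X4) :
      Prf Xk X4 ρ h (Γ.fill (NSeq.fcons (.dia A) (nestBox Δs (NSeq.fcons (.dia A) Δl)))) →
      Prf Xk X4 ρ (h+1) (Γ.fill (NSeq.fcons (.dia A) (nestBox Δs Δl)))
  | cut {h : ℕ} (Γ : Ctx) (A : Formula) (hA : ρ A.deg) :
      Prf Xk X4 ρ h (Γ.fill (NSeq.fcons A NSeq.nil)) →
      Prf Xk X4 ρ h (Γ.fill (NSeq.fcons A.negf NSeq.nil)) →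
      Prf Xk X4 ρ (h+1) (Γ.fill NSeq.nil)
  | exch {h : ℕ} {Γ Δ : NSeq} : NSeq.Perm Γ Δ → Prf Xk X4 ρ h Γ → Prf Xk X4 ρ h Δ

/-- No cut formula allowed: the cut-free system. -/
def cutFree : ℕ → Prop := fun _ => False

/-- Unrestricted cut. -/
def cutAll : ℕ → Prop := fun _ => True

/-- Provability (some proof of some height). -/
def Provable (Xk X4 : Set ℕ) (ρ : ℕ → Prop) (Γ : NSeq) : Prop := ∃ h, Prf Xk X4 ρ h Γ

/-- Hilbert-style provability in `K + 4^X`: classical propositional logic,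
axiom k, modus ponens, necessitation, and quasi-transitivity `♦ⁿA ⊃ ♦A` for `n ∈ X`. -/
inductive KProv (X : Set ℕ) : Formula → Prop
  | ax1 (A B : Formula) : KProv X (A.impl (B.impl A))
  | ax2 (A B C : Formula) : KProv X ((A.impl B).impl ((A.impl (B.impl C)).impl (A.impl C)))
  | andI (A B : Formula) : KProv X (A.impl (B.impl (A.and B)))
  | andE1 (A B : Formula) : KProv X ((A.and B).impl A)
  | andE2 (A B : Formula) : KProv X ((A.and B).impl B)
  | orI1 (A B : Formula) : KProv X (A.impl (A.or B))
  | orI2 (A B : Formula) : KProv X (B.impl (A.or B))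
  | orE (A B C : Formula) : KProv X ((A.impl C).impl ((B.impl C).impl ((A.or B).impl C)))
  | negI (A B : Formula) : KProv X ((A.impl B).impl ((A.impl B.negf).impl A.negf))
  | negE (A : Formula) : KProv X (A.negf.negf.impl A)
  | axK (A B : Formula) :
      KProv X ((Formula.box (A.impl B)).impl ((Formula.box A).impl (Formula.box B)))
  | mp {A B : Formula} : KProv X (A.impl B) → KProv X A → KProv X B
  | nec {A : Formula} : KProv X A → KProv X (Formula.box A)
  | path {n : ℕ} (hn : n ∈ X) (A : Formula) :
      KProv X ((Formula.diaIter n A).impl (Formula.dia A))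

/-- The approximations `X_p` of the completion of `X`. -/
def compStep (X : Set ℕ) : ℕ → Set ℕ
  | 0 => X
  | p+1 => compStep X p ∪ {k | ∃ m n, m ∈ compStep X p ∧ n ∈ compStep X p ∧ k = m + n - 1}

/-- The completion `X̂` of `X`. -/
def completion (X : Set ℕ) : Set ℕ := ⋃ p, compStep X p
namespace NSeq

theorem Perm.refl : ∀ Γ : NSeq, Perm Γ Γ
  | .nil => .nil
  | .fcons A Γ => .fcons A (Perm.refl Γ)
  | .bcons B Γ => .bcons (Perm.refl B) (Perm.refl Γ)

theorem Perm.symm {Γ Δ : NSeq} (h : Perm Γ Δ) : Perm Δ Γ := by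
  induction h with
  | nil => exact .nil
  | fcons A _ ih => exact .fcons A ih
  | bcons _ _ ih1 ih2 => exact .bcons ih1 ih2
  | swapff A B Γ => exact .swapff B A Γ
  | swapfb A B Γ => exact .swapbf A B Γ
  | swapbf A B Γ => exact .swapfb A B Γ
  | swapbb B C Γ => exact .swapbb C B Γ
  | trans _ _ ih1 ih2 => exact .trans ih2 ih1

theorem Perm.appendRight : ∀ (Γ : NSeq) {Δ Δ' : NSeq}, Perm Δ Δ' →
    Perm (Γ.append Δ) (Γ.append Δ')
  | .nil, _, _, h => h
  | .fcons A Γ, _, _, h => .fcons A (Perm.appendRight Γ h)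
  | .bcons B Γ, _, _, h => .bcons (Perm.refl B) (Perm.appendRight Γ h)

theorem Perm.appendF : ∀ (Γ : NSeq) (B : Formula) (Δ : NSeq),
    Perm (Γ.append (NSeq.fcons B Δ)) (NSeq.fcons B (Γ.append Δ))
  | .nil, _, _ => Perm.refl _
  | .fcons A Γ, B, Δ => .trans (.fcons A (Perm.appendF Γ B Δ)) (.swapff A B _)
  | .bcons S Γ, B, Δ => .trans (.bcons (Perm.refl S) (Perm.appendF Γ B Δ)) (.swapbf B S _)

/-- `Ins B Γ Δ`: `Δ` is `Γ` with one occurrence of the formula `B` inserted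
somewhere (at any depth). -/
inductive Ins (B : Formula) : NSeq → NSeq → Prop
  | here (Γ : NSeq) : Ins B Γ (fcons B Γ)
  | fcons (A : Formula) {Γ Δ : NSeq} : Ins B Γ Δ → Ins B (fcons A Γ) (fcons A Δ)
  | bconsR {S Γ Δ : NSeq} : Ins B Γ Δ → Ins B (bcons S Γ) (bcons S Δ)
  | bconsL {S S' Γ : NSeq} : Ins B S S' → Ins B (bcons S Γ) (bcons S' Γ)

theorem Ins.appendLeft {B : Formula} {Γ Γ' : NSeq} (h : Ins B Γ Γ') (Δ : NSeq) :
    Ins B (Γ.append Δ) (Γ'.append Δ) := by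
  induction h with
  | here Γ => exact .here _
  | fcons A _ ih => exact .fcons A ih
  | bconsR _ ih => exact .bconsR ih
  | bconsL h => exact .bconsL h

theorem Ins.appendRight {B : Formula} (Γ : NSeq) {Δ Δ' : NSeq} (h : Ins B Δ Δ') :
    Ins B (Γ.append Δ) (Γ.append Δ') := by
  induction Γ with
  | nil => exact h
  | fcons A Γ ih => exact .fcons A ih
  | bcons S Γ _ ih => exact .bconsR ih

theorem Ins.append_cases {B : Formula} : ∀ (Γ : NSeq) {Δ E : NSeq},
    Ins B (Γ.append Δ) E →
    (∃ Γ', Ins B Γ Γ' ∧ E = Γ'.append Δ) ∨ (∃ Δ', Ins B Δ Δ' ∧ E = Γ.append Δ') := by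
  intro Γ
  induction Γ with
  | nil => intro Δ E h; exact .inr ⟨E, h, rfl⟩
  | fcons A Γ ih =>
      intro Δ E h
      cases h with
      | here => exact .inl ⟨NSeq.fcons B (NSeq.fcons A Γ), .here _, rfl⟩
      | fcons _ h =>
          rcases ih h with ⟨Γ', hi, rfl⟩ | ⟨Δ', hi, rfl⟩
          · exact .inl ⟨NSeq.fcons A Γ', .fcons A hi, rfl⟩
          · exact .inr ⟨Δ', hi, rfl⟩
  | bcons S Γ _ ih =>
      intro Δ E h
      cases h with
      | here => exact .inl ⟨NSeq.fcons B (NSeq.bcons S Γ), .here _, rfl⟩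
      | bconsR h =>
          rcases ih h with ⟨Γ', hi, rfl⟩ | ⟨Δ', hi, rfl⟩
          · exact .inl ⟨NSeq.bcons S Γ', .bconsR hi, rfl⟩
          · exact .inr ⟨Δ', hi, rfl⟩
      | bconsL h => exact .inl ⟨NSeq.bcons _ Γ, .bconsL h, rfl⟩

/-- Insertion commutes with hereditary permutation. -/
theorem Ins.perm {B : Formula} : ∀ {Γ Δ Γ' : NSeq}, Perm Γ Δ → Ins B Γ Γ' →
    ∃ Δ', Ins B Δ Δ' ∧ Perm Γ' Δ' := by
  intro Γ Δ Γ' hp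
  induction hp generalizing Γ' with
  | nil =>
      intro h; cases h
      exact ⟨NSeq.fcons B NSeq.nil, .here _, Perm.refl _⟩
  | @fcons A Γ Δ hp ih =>
      intro h
      cases h with
      | here => exact ⟨NSeq.fcons B (NSeq.fcons A Δ), .here _, .fcons B (.fcons A hp)⟩
      | fcons _ h =>
          rcases ih h with ⟨Δ', hi, hpp⟩
          exact ⟨NSeq.fcons A Δ', .fcons A hi, .fcons A hpp⟩
  | @bcons S S' Γ Δ hpS hpΓ ihS ihΓ =>
      intro h
      cases h with
      | here => exact ⟨NSeq.fcons B (NSeq.bcons S' Δ), .here _, .fcons B (.bcons hpS hpΓ)⟩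
      | bconsR h =>
          rcases ihΓ h with ⟨Δ', hi, hpp⟩
          exact ⟨NSeq.bcons S' Δ', .bconsR hi, .bcons hpS hpp⟩
      | bconsL h =>
          rcases ihS h with ⟨T', hi, hpp⟩
          exact ⟨NSeq.bcons T' Δ, .bconsL hi, .bcons hpp hpΓ⟩
  | swapff A C Γ =>
      intro h
      cases h with
      | here =>
          exact ⟨NSeq.fcons B (NSeq.fcons C (NSeq.fcons A Γ)), .here _,
            .fcons B (.swapff A C Γ)⟩
      | fcons _ h =>
          cases h with
          | here =>
              refine ⟨NSeq.fcons C (NSeq.fcons A (NSeq.fcons B Γ)),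
                .fcons C (.fcons A (.here _)), ?_⟩
              exact Perm.trans (Perm.fcons A (Perm.swapff B C Γ))
                (Perm.swapff A C (NSeq.fcons B Γ))
          | fcons _ h =>
              exact ⟨NSeq.fcons C (NSeq.fcons A _), .fcons C (.fcons A h), .swapff A C _⟩
  | swapfb A S Γ =>
      intro h
      cases h with
      | here =>
          exact ⟨NSeq.fcons B (NSeq.bcons S (NSeq.fcons A Γ)), .here _,
            .fcons B (.swapfb A S Γ)⟩
      | fcons _ h =>
          cases h with
          | here =>
              refine ⟨NSeq.bcons S (NSeq.fcons A (NSeq.fcons B Γ)),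
                .bconsR (.fcons A (.here _)), ?_⟩
              exact Perm.trans (Perm.fcons A (Perm.swapfb B S Γ))
                (Perm.swapfb A S (NSeq.fcons B Γ))
          | bconsR h =>
              exact ⟨NSeq.bcons S (NSeq.fcons A _), .bconsR (.fcons A h), .swapfb A S _⟩
          | bconsL h =>
              exact ⟨NSeq.bcons _ (NSeq.fcons A Γ), .bconsL h, .swapfb A _ Γ⟩
  | swapbf A S Γ =>
      intro h
      cases h with
      | here =>
          exact ⟨NSeq.fcons B (NSeq.fcons A (NSeq.bcons S Γ)), .here _,
            .fcons B (.swapbf A S Γ)⟩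
      | bconsR h =>
          cases h with
          | here =>
              refine ⟨NSeq.fcons A (NSeq.bcons S (NSeq.fcons B Γ)),
                .fcons A (.bconsR (.here _)), ?_⟩
              exact Perm.trans (Perm.bcons (Perm.refl S) (Perm.swapff B A Γ))
                (Perm.swapbf A S (NSeq.fcons B Γ))
          | fcons _ h =>
              exact ⟨NSeq.fcons A (NSeq.bcons S _), .fcons A (.bconsR h), .swapbf A S _⟩
      | bconsL h =>
          exact ⟨NSeq.fcons A (NSeq.bcons _ Γ), .fcons A (.bconsL h), .swapbf A _ Γ⟩
  | swapbb S T Γ =>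
      intro h
      cases h with
      | here =>
          exact ⟨NSeq.fcons B (NSeq.bcons T (NSeq.bcons S Γ)), .here _,
            .fcons B (.swapbb S T Γ)⟩
      | bconsR h =>
          cases h with
          | here =>
              refine ⟨NSeq.bcons T (NSeq.fcons B (NSeq.bcons S Γ)),
                .bconsR (.here _), ?_⟩
              exact Perm.trans (Perm.trans (Perm.swapbf B S (NSeq.bcons T Γ))
                (Perm.fcons B (Perm.swapbb S T Γ)))
                (Perm.symm (Perm.swapbf B T (NSeq.bcons S Γ)))
          | bconsR h =>
              exact ⟨NSeq.bcons T (NSeq.bcons S _), .bconsR (.bconsR h), .swapbb S T _⟩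
          | bconsL h =>
              exact ⟨NSeq.bcons _ (NSeq.bcons S Γ), .bconsL h, .swapbb S _ Γ⟩
      | bconsL h =>
          exact ⟨NSeq.bcons T (NSeq.bcons _ Γ), .bconsR (.bconsL h), .swapbb _ T Γ⟩
  | trans hp1 hp2 ih1 ih2 =>
      intro h
      rcases ih1 h with ⟨Δ₁, hi1, hpp1⟩
      rcases ih2 hi1 with ⟨Δ₂, hi2, hpp2⟩
      exact ⟨Δ₂, hi2, hpp1.trans hpp2⟩

end NSeq
namespace Ctx

/-- Composition of contexts. -/
def comp : Ctx → Ctx → Ctx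
  | hole, D => D
  | fcons A C, D => fcons A (C.comp D)
  | scons S C, D => scons S (C.comp D)
  | binto C S, D => binto (C.comp D) S

theorem comp_fill : ∀ (C D : Ctx) (T : NSeq), (C.comp D).fill T = C.fill (D.fill T)
  | hole, _, _ => rfl
  | fcons A C, D, T => by simp [comp, fill, comp_fill C D T]
  | scons S C, D, T => by simp [comp, fill, comp_fill C D T]
  | binto C S, D, T => by simp [comp, fill, comp_fill C D T]

/-- The context whose spine is a nested sequent followed by a context. -/
def app : NSeq → Ctx → Ctx
  | .nil, C => C
  | .fcons A Γ, C => fcons A (app Γ C)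
  | .bcons S Γ, C => scons S (app Γ C)

theorem app_fill : ∀ (Γ : NSeq) (C : Ctx) (T : NSeq),
    (app Γ C).fill T = Γ.append (C.fill T)
  | .nil, _, _ => rfl
  | .fcons A Γ, C, T => by simp [app, fill, NSeq.append, app_fill Γ C T]
  | .bcons S Γ, C, T => by simp [app, fill, NSeq.append, app_fill Γ C T]

/-- Filling respects hereditary permutation. -/
theorem fill_perm : ∀ (C : Ctx) {S T : NSeq}, NSeq.Perm S T →
    NSeq.Perm (C.fill S) (C.fill T)
  | hole, _, _, h => h
  | fcons A C, _, _, h => .fcons A (fill_perm C h)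
  | scons S' C, _, _, h => .bcons (NSeq.Perm.refl S') (fill_perm C h)
  | binto C S', _, _, h => .bcons (fill_perm C h) (NSeq.Perm.refl S')

/-- Insertion at any position inside the filled part. -/
theorem ins_fill_right {B : Formula} : ∀ (C : Ctx) {T T' : NSeq}, NSeq.Ins B T T' →
    NSeq.Ins B (C.fill T) (C.fill T')
  | hole, _, _, h => h
  | fcons A C, _, _, h => .fcons A (ins_fill_right C h)
  | scons S C, _, _, h => .bconsR (ins_fill_right C h)
  | binto C S, _, _, h => .bconsL (ins_fill_right C h)

/-- Insertion at the hole. -/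
theorem ins_at_fill (B : Formula) (C : Ctx) (T : NSeq) :
    NSeq.Ins B (C.fill T) (C.fill (NSeq.fcons B T)) :=
  ins_fill_right C (.here T)

/-- Decomposition of an insertion into a filled context: the insertion happens
either entirely outside the filled part (uniformly in the filling) or
inside the filled part. -/
theorem ins_fill_cases {B : Formula} : ∀ (C : Ctx) {S Δ : NSeq},
    NSeq.Ins B (C.fill S) Δ →
    (∃ C' : Ctx, Δ = C'.fill S ∧ ∀ T, NSeq.Ins B (C.fill T) (C'.fill T)) ∨
    (∃ S', NSeq.Ins B S S' ∧ Δ = C.fill S') := by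
  intro C
  induction C with
  | hole => intro S Δ h; exact .inr ⟨Δ, h, rfl⟩
  | fcons A C ih =>
      intro S Δ h
      cases h with
      | here =>
          exact .inl ⟨Ctx.fcons B (Ctx.fcons A C), rfl, fun T => .here _⟩
      | fcons _ h =>
          rcases ih h with ⟨C', rfl, hins⟩ | ⟨S', hi, rfl⟩
          · exact .inl ⟨Ctx.fcons A C', rfl, fun T => .fcons A (hins T)⟩
          · exact .inr ⟨S', hi, rfl⟩
  | scons S₀ C ih =>
      intro S Δ h
      cases h with
      | here =>
          exact .inl ⟨Ctx.fcons B (Ctx.scons S₀ C), rfl, fun T => .here _⟩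
      | bconsR h =>
          rcases ih h with ⟨C', rfl, hins⟩ | ⟨S', hi, rfl⟩
          · exact .inl ⟨Ctx.scons S₀ C', rfl, fun T => .bconsR (hins T)⟩
          · exact .inr ⟨S', hi, rfl⟩
      | bconsL h =>
          exact .inl ⟨Ctx.scons _ C, rfl, fun T => .bconsL h⟩
  | binto C S₀ ih =>
      intro S Δ h
      cases h with
      | here =>
          exact .inl ⟨Ctx.fcons B (Ctx.binto C S₀), rfl, fun T => .here _⟩
      | bconsR h =>
          exact .inl ⟨Ctx.binto C _, rfl, fun T => .bconsR h⟩
      | bconsL h =>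
          rcases ih h with ⟨C', rfl, hins⟩ | ⟨S', hi, rfl⟩
          · exact .inl ⟨Ctx.binto C' S₀, rfl, fun T => .bconsL (hins T)⟩
          · exact .inr ⟨S', hi, rfl⟩

end Ctx

/-- The context carving out the innermost `Θ`-slot of `nestBox`. -/
def nestCtx : List NSeq → Ctx
  | [] => Ctx.binto Ctx.hole NSeq.nil
  | Δ :: rest => Ctx.binto (Ctx.app Δ (nestCtx rest)) NSeq.nil

theorem nestCtx_fill : ∀ (L : List NSeq) (Θ : NSeq), (nestCtx L).fill Θ = nestBox L Θ
  | [], Θ => rfl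
  | Δ :: rest, Θ => by
      simp [nestCtx, Ctx.fill, nestBox, Ctx.app_fill, nestCtx_fill rest Θ]

theorem nestBox_concat : ∀ (L : List NSeq) (D : NSeq) (Θ : NSeq),
    nestBox (L ++ [D]) Θ = nestBox L (D.append (NSeq.bcons Θ NSeq.nil))
  | [], D, Θ => rfl
  | Δ :: rest, D, Θ => by simp [nestBox, nestBox_concat rest D Θ]

/-- Decomposition of an insertion into a `nestBox`. -/
theorem ins_nestBox_cases {B : Formula} : ∀ (Δs : List NSeq) {Θ N : NSeq},
    NSeq.Ins B (nestBox Δs Θ) N →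
    NSeq.Perm N (NSeq.fcons B (nestBox Δs Θ)) ∨
    (∃ Δs', Δs'.length = Δs.length ∧ NSeq.Perm N (nestBox Δs' Θ) ∧
      ∀ Θ₀, NSeq.Ins B (nestBox Δs Θ₀) (nestBox Δs' Θ₀)) ∨
    (∃ Θ', NSeq.Ins B Θ Θ' ∧ N = nestBox Δs Θ') := by
  intro Δs
  induction Δs with
  | nil =>
      intro Θ N h
      cases h with
      | here => exact .inl (NSeq.Perm.refl _)
      | bconsR h =>
          cases h
          exact .inl (NSeq.Perm.swapbf B Θ NSeq.nil)
      | bconsL h => exact .inr (.inr ⟨_, h, rfl⟩)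
  | cons Δ rest ih =>
      intro Θ N h
      cases h with
      | here => exact .inl (NSeq.Perm.refl _)
      | bconsR h =>
          cases h
          exact .inl (NSeq.Perm.swapbf B _ NSeq.nil)
      | bconsL h =>
          rcases NSeq.Ins.append_cases Δ h with ⟨Δ', hi, rfl⟩ | ⟨M', hi, rfl⟩
          · refine .inr (.inl ⟨Δ' :: rest, by simp, NSeq.Perm.refl _, fun Θ₀ => ?_⟩)
            exact .bconsL (hi.appendLeft _)
          · rcases ih hi with hperm | ⟨rest', hlen, hperm, hins⟩ | ⟨Θ', hiΘ, rfl⟩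
            · refine .inr (.inl ⟨(NSeq.fcons B Δ) :: rest, by simp, ?_, fun Θ₀ => ?_⟩)
              · refine NSeq.Perm.bcons ?_ (NSeq.Perm.refl _)
                refine NSeq.Perm.trans (NSeq.Perm.appendRight Δ hperm) ?_
                exact NSeq.Perm.appendF Δ B (nestBox rest Θ)
              · exact .bconsL (.here _)
            · refine .inr (.inl ⟨Δ :: rest', by simp [hlen], ?_, fun Θ₀ => ?_⟩)
              · exact NSeq.Perm.bcons (NSeq.Perm.appendRight Δ hperm) (NSeq.Perm.refl _)
              · exact .bconsL (NSeq.Ins.appendRight Δ (hins Θ₀))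
            · exact .inr (.inr ⟨Θ', hiΘ, rfl⟩)
/-- Nested sequents containing no boxes. -/
inductive Flat : NSeq → Prop
  | nil : Flat .nil
  | fcons (A : Formula) {Γ : NSeq} : Flat Γ → Flat (.fcons A Γ)

theorem ins_flat {B : Formula} : ∀ {S S' : NSeq}, Flat S → NSeq.Ins B S S' →
    NSeq.Perm S' (NSeq.fcons B S) := by
  intro S S' hf hi
  induction hi with
  | here => exact NSeq.Perm.refl _
  | fcons A h ih =>
      cases hf with
      | fcons _ hf =>
          exact NSeq.Perm.trans (NSeq.Perm.fcons A (ih hf)) (NSeq.Perm.swapff A B _)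
  | bconsR h _ => cases hf
  | bconsL h => cases hf

/-- Prepending a formula at the hole position. -/
def Ctx.fcb (C : Ctx) (B : Formula) : Ctx := C.comp (Ctx.fcons B Ctx.hole)

theorem Ctx.fcb_fill (C : Ctx) (B : Formula) (T : NSeq) :
    (C.fcb B).fill T = C.fill (NSeq.fcons B T) := by
  rw [Ctx.fcb, Ctx.comp_fill]; rfl

theorem ins_nestBox_theta {B : Formula} {Θ Θ' : NSeq} (Δs : List NSeq)
    (h : NSeq.Ins B Θ Θ') : NSeq.Ins B (nestBox Δs Θ) (nestBox Δs Θ') := by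
  have := Ctx.ins_fill_right (nestCtx Δs) h
  rwa [nestCtx_fill, nestCtx_fill] at this

/-- Admissibility of weakening. -/
theorem Prf.weak {Xk X4 : Set ℕ} {ρ : ℕ → Prop} {B : Formula} :
    ∀ {h : ℕ} {Γ : NSeq}, Prf Xk X4 ρ h Γ → ∀ {Δ : NSeq}, NSeq.Ins B Γ Δ →
    Prf Xk X4 ρ h Δ := by
  intro h Γ hp
  induction hp with
  | id C p hh =>
      intro Δ hins
      rcases Ctx.ins_fill_cases C hins with ⟨C', rfl, _⟩ | ⟨S', hi, rfl⟩
      · exact .id C' p hh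
      · have hperm := ins_flat (Flat.fcons _ (Flat.fcons _ Flat.nil)) hi
        refine Prf.exch (Ctx.fill_perm C hperm.symm) ?_
        rw [← Ctx.fcb_fill]
        exact .id _ p hh
  | orR C A A' hpre ih =>
      intro Δ hins
      rcases Ctx.ins_fill_cases C hins with ⟨C', rfl, hall⟩ | ⟨S', hi, rfl⟩
      · exact .orR C' A A' (ih (hall _))
      · have hperm := ins_flat (Flat.fcons _ Flat.nil) hi
        refine Prf.exch (Ctx.fill_perm C hperm.symm) ?_
        rw [← Ctx.fcb_fill]
        refine .orR _ A A' ?_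
        rw [Ctx.fcb_fill]
        exact ih (Ctx.ins_at_fill B C _)
  | andR C A A' hpre1 hpre2 ih1 ih2 =>
      intro Δ hins
      rcases Ctx.ins_fill_cases C hins with ⟨C', rfl, hall⟩ | ⟨S', hi, rfl⟩
      · exact .andR C' A A' (ih1 (hall _)) (ih2 (hall _))
      · have hperm := ins_flat (Flat.fcons _ Flat.nil) hi
        refine Prf.exch (Ctx.fill_perm C hperm.symm) ?_
        rw [← Ctx.fcb_fill]
        refine .andR _ A A' ?_ ?_ <;> rw [Ctx.fcb_fill]
        · exact ih1 (Ctx.ins_at_fill B C _)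
        · exact ih2 (Ctx.ins_at_fill B C _)
  | boxR C A hpre ih =>
      intro Δ hins
      rcases Ctx.ins_fill_cases C hins with ⟨C', rfl, hall⟩ | ⟨S', hi, rfl⟩
      · exact .boxR C' A (ih (hall _))
      · have hperm := ins_flat (Flat.fcons _ Flat.nil) hi
        refine Prf.exch (Ctx.fill_perm C hperm.symm) ?_
        rw [← Ctx.fcb_fill]
        refine .boxR _ A ?_
        rw [Ctx.fcb_fill]
        exact ih (Ctx.ins_at_fill B C _)
  | @diaR h₀ C A Δ₀ hpre ih =>
      intro Δ hins
      rcases Ctx.ins_fill_cases C hins with ⟨C', rfl, hall⟩ | ⟨S', hi, rfl⟩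
      · exact .diaR C' A Δ₀ (ih (hall _))
      · have key : Prf Xk X4 ρ (h₀+1)
            (C.fill (NSeq.fcons B (NSeq.fcons (.dia A) (NSeq.bcons Δ₀ NSeq.nil)))) := by
          rw [← Ctx.fcb_fill]
          refine .diaR _ A Δ₀ ?_
          rw [Ctx.fcb_fill]
          exact ih (Ctx.ins_at_fill B C _)
        cases hi with
        | here => exact key
        | fcons _ h =>
            cases h with
            | here =>
                exact Prf.exch (Ctx.fill_perm C (NSeq.Perm.swapff _ B _).symm) key
            | bconsR h2 =>
                cases h2
                refine Prf.exch (Ctx.fill_perm C ?_) key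
                exact (NSeq.Perm.trans
                  (NSeq.Perm.fcons _ (NSeq.Perm.swapbf B Δ₀ NSeq.nil))
                  (NSeq.Perm.swapff _ B _)).symm
            | bconsL h2 =>
                refine .diaR C A _ ?_
                exact ih (Ctx.ins_fill_right C (.fcons _ (.bconsL (.fcons A h2))))
  | @propk h₀ C A Δs Δn hn hpre ih =>
      intro Δ hins
      rcases Ctx.ins_fill_cases C hins with ⟨C', rfl, hall⟩ | ⟨S', hi, rfl⟩
      · exact .propk C' A Δs Δn hn (ih (hall _))
      · have key : Prf Xk X4 ρ (h₀+1)
            (C.fill (NSeq.fcons B (NSeq.fcons (.dia A) (nestBox Δs Δn)))) := by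
          rw [← Ctx.fcb_fill]
          refine .propk _ A Δs Δn hn ?_
          rw [Ctx.fcb_fill]
          exact ih (Ctx.ins_at_fill B C _)
        cases hi with
        | here => exact key
        | fcons _ h =>
            rcases ins_nestBox_cases Δs h with hperm | ⟨Δs', hlen, hperm, hinsN⟩ | ⟨Θ', hiΘ, rfl⟩
            · refine Prf.exch (Ctx.fill_perm C ?_) key
              exact (NSeq.Perm.trans (NSeq.Perm.fcons _ hperm) (NSeq.Perm.swapff _ B _)).symm
            · refine Prf.exch (Ctx.fill_perm C (NSeq.Perm.fcons _ hperm.symm)) ?_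
              refine .propk C A Δs' Δn (hlen ▸ hn) ?_
              exact ih (Ctx.ins_fill_right C (.fcons _ (hinsN _)))
            · refine .propk C A Δs Θ' hn ?_
              exact ih (Ctx.ins_fill_right C (.fcons _ (ins_nestBox_theta Δs (.fcons A hiΘ))))
  | @prop4 h₀ C A Δs Δl hn hpre ih =>
      intro Δ hins
      rcases Ctx.ins_fill_cases C hins with ⟨C', rfl, hall⟩ | ⟨S', hi, rfl⟩
      · exact .prop4 C' A Δs Δl hn (ih (hall _))
      · have key : Prf Xk X4 ρ (h₀+1)
            (C.fill (NSeq.fcons B (NSeq.fcons (.dia A) (nestBox Δs Δl)))) := by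
          rw [← Ctx.fcb_fill]
          refine .prop4 _ A Δs Δl hn ?_
          rw [Ctx.fcb_fill]
          exact ih (Ctx.ins_at_fill B C _)
        cases hi with
        | here => exact key
        | fcons _ h =>
            rcases ins_nestBox_cases Δs h with hperm | ⟨Δs', hlen, hperm, hinsN⟩ | ⟨Θ', hiΘ, rfl⟩
            · refine Prf.exch (Ctx.fill_perm C ?_) key
              exact (NSeq.Perm.trans (NSeq.Perm.fcons _ hperm) (NSeq.Perm.swapff _ B _)).symm
            · refine Prf.exch (Ctx.fill_perm C (NSeq.Perm.fcons _ hperm.symm)) ?_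
              refine .prop4 C A Δs' Δl (hlen ▸ hn) ?_
              exact ih (Ctx.ins_fill_right C (.fcons _ (hinsN _)))
            · refine .prop4 C A Δs Θ' hn ?_
              exact ih (Ctx.ins_fill_right C (.fcons _ (ins_nestBox_theta Δs (.fcons _ hiΘ))))
  | cut C A hA hpre1 hpre2 ih1 ih2 =>
      intro Δ hins
      rcases Ctx.ins_fill_cases C hins with ⟨C', rfl, hall⟩ | ⟨S', hi, rfl⟩
      · exact .cut C' A hA (ih1 (hall _)) (ih2 (hall _))
      · cases hi
        rw [← Ctx.fcb_fill]
        refine .cut _ A hA ?_ ?_ <;> rw [Ctx.fcb_fill]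
        · exact ih1 (Ctx.ins_at_fill B C _)
        · exact ih2 (Ctx.ins_at_fill B C _)
  | exch hperm hp ih =>
      intro Δ hins
      rcases NSeq.Ins.perm hperm.symm hins with ⟨Δ₀, hi₀, hpp⟩
      exact Prf.exch hpp.symm (ih hi₀)
theorem Prf.succ {Xk X4 : Set ℕ} {ρ : ℕ → Prop} :
    ∀ {h : ℕ} {Γ : NSeq}, Prf Xk X4 ρ h Γ → Prf Xk X4 ρ (h+1) Γ := by
  intro h Γ hp
  induction hp with
  | id C p h => exact .id C p (h+1)
  | orR C A B _ ih => exact .orR C A B ih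
  | andR C A B _ _ ih1 ih2 => exact .andR C A B ih1 ih2
  | boxR C A _ ih => exact .boxR C A ih
  | diaR C A Δ _ ih => exact .diaR C A Δ ih
  | propk C A Δs Δn hn _ ih => exact .propk C A Δs Δn hn ih
  | prop4 C A Δs Δl hn _ ih => exact .prop4 C A Δs Δl hn ih
  | cut C A hA _ _ ih1 ih2 => exact .cut C A hA ih1 ih2
  | exch hperm _ ih => exact .exch hperm ih

theorem Prf.mono {Xk X4 : Set ℕ} {ρ : ℕ → Prop} {h h' : ℕ} {Γ : NSeq}
    (hp : Prf Xk X4 ρ h Γ) (hle : h ≤ h') : Prf Xk X4 ρ h' Γ := by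
  induction h' with
  | zero => exact Nat.le_zero.mp hle ▸ hp
  | succ n ih =>
      rcases Nat.lt_or_ge h (n+1) with hlt | hge
      · exact (ih (Nat.lt_succ_iff.mp hlt)).succ
      · exact Nat.le_antisymm hle hge ▸ hp

/-- The propagation rule `♦ₖₙ` is derivable in `nK + ♦₄X` for `n ∈ X`, `n > 1`. -/
theorem propk_derived {X : Set ℕ} (hX : X ⊆ {n : ℕ | 1 < n}) {n : ℕ} (hn : n ∈ X)
    (Γ : Ctx) (A : Formula) (Δs : List NSeq) (Δn : NSeq) (hlen : Δs.length + 1 = n)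
    {h : ℕ}
    (hp : Prf ∅ X cutFree h (Γ.fill (NSeq.fcons (.dia A) (nestBox Δs (NSeq.fcons A Δn))))) :
    Prf ∅ X cutFree (h+2) (Γ.fill (NSeq.fcons (.dia A) (nestBox Δs Δn))) := by
  have h1 : 1 < n := hX hn
  obtain rfl | ⟨L, D, rfl⟩ := Δs.eq_nil_or_concat
  · simp at hlen; omega
  rw [List.concat_eq_append] at hlen hp ⊢
  have hlen' : L.length + 2 = n := by
    have := hlen; simpa using this
  set Cmid : Ctx := Γ.comp (Ctx.fcons (.dia A) (nestCtx L)) with hCmid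
  have hCfill : ∀ T : NSeq, Cmid.fill T = Γ.fill (NSeq.fcons (.dia A) (nestBox L T)) := by
    intro T
    simp [hCmid, Ctx.comp_fill, Ctx.fill, nestCtx_fill]
  set C₂ : Ctx := Cmid.comp (Ctx.app D Ctx.hole) with hC₂
  have hC₂fill : ∀ T : NSeq, C₂.fill T = Cmid.fill (D.append T) := by
    intro T
    simp [hC₂, Ctx.comp_fill, Ctx.app_fill, Ctx.fill]
  -- the weakened hypothesis
  have hw : Prf ∅ X cutFree h
      (Cmid.fill (NSeq.fcons (.dia A)
        (D.append (NSeq.bcons (NSeq.fcons A Δn) NSeq.nil)))) := by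
    refine Prf.weak ?_ (Ctx.ins_at_fill (.dia A) Cmid _)
    rw [hCfill]
    rw [nestBox_concat] at hp
    exact hp
  -- move the inner ♦A past D
  have hw2 : Prf ∅ X cutFree h
      (C₂.fill (NSeq.fcons (.dia A) (NSeq.bcons (NSeq.fcons A Δn) NSeq.nil))) := by
    rw [hC₂fill]
    refine Prf.exch (Ctx.fill_perm Cmid ?_) hw
    exact (NSeq.Perm.appendF D (.dia A) _).symm
  -- apply diaR
  have hw3 : Prf ∅ X cutFree (h+1)
      (C₂.fill (NSeq.fcons (.dia A) (NSeq.bcons Δn NSeq.nil))) :=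
    Prf.diaR C₂ A Δn hw2
  -- move the inner ♦A back to the front
  have hw4 : Prf ∅ X cutFree (h+1)
      (Cmid.fill (NSeq.fcons (.dia A) (D.append (NSeq.bcons Δn NSeq.nil)))) := by
    rw [hC₂fill] at hw3
    refine Prf.exch (Ctx.fill_perm Cmid ?_) hw3
    exact NSeq.Perm.appendF D (.dia A) _
  -- apply prop4
  have hw5 : Prf ∅ X cutFree (h+2)
      (Γ.fill (NSeq.fcons (.dia A) (nestBox L (D.append (NSeq.bcons Δn NSeq.nil))))) := by
    refine Prf.prop4 Γ A L (D.append (NSeq.bcons Δn NSeq.nil)) (hlen' ▸ hn) ?_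
    rw [← hCfill]
    exact hw4
  rw [nestBox_concat]
  exact hw5
/-- Each propagation rule `♦ₖₙ` for `n ∈ X` is admissible in `nK + ♦₄X`;
hence every sequent provable in `nK + ♦ₖX` is provable in `nK + ♦₄X`. -/
theorem propk_to_prop4 (X : Set ℕ) (hX : X ⊆ {n : ℕ | 1 < n}) :
    (∀ n ∈ X, ∀ (Γ : Ctx) (A : Formula) (Δs : List NSeq) (Δn : NSeq),
      Δs.length + 1 = n →
      Provable ∅ X cutFree (Γ.fill (NSeq.fcons (.dia A) (nestBox Δs (NSeq.fcons A Δn)))) →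
      Provable ∅ X cutFree (Γ.fill (NSeq.fcons (.dia A) (nestBox Δs Δn)))) ∧
    (∀ Γ : NSeq, Provable X ∅ cutFree Γ → Provable ∅ X cutFree Γ) := by
  constructor
  · rintro n hn Γ A Δs Δn hlen ⟨h, hp⟩
    exact ⟨h + 2, propk_derived hX hn Γ A Δs Δn hlen hp⟩
  · rintro Γ ⟨h, hp⟩
    induction hp with
    | id C p h => exact ⟨0, .id C p 0⟩
    | orR C A B _ ih =>
        obtain ⟨h', hp'⟩ := ih
        exact ⟨h' + 1, .orR C A B hp'⟩
    | andR C A B _ _ ih1 ih2 =>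
        obtain ⟨h1, hp1⟩ := ih1
        obtain ⟨h2, hp2⟩ := ih2
        exact ⟨max h1 h2 + 1, .andR C A B (hp1.mono (le_max_left _ _))
          (hp2.mono (le_max_right _ _))⟩
    | boxR C A _ ih =>
        obtain ⟨h', hp'⟩ := ih
        exact ⟨h' + 1, .boxR C A hp'⟩
    | diaR C A Δ _ ih =>
        obtain ⟨h', hp'⟩ := ih
        exact ⟨h' + 1, .diaR C A Δ hp'⟩
    | propk C A Δs Δn hn _ ih =>
        obtain ⟨h', hp'⟩ := ih
        exact ⟨h' + 2, propk_derived hX hn C A Δs Δn rfl hp'⟩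
    | prop4 C A Δs Δl hn _ _ => exact absurd hn (Set.notMem_empty _)
    | cut C A hA => exact hA.elim
    | exch hperm _ ih =>
        obtain ⟨h', hp'⟩ := ih
        exact ⟨h', .exch hperm hp'⟩
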